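/- (Limited Loss Theorem) For any instance of the traveling repairman problem with unit-length time windows, if R* is an optimal service run with respect to untrimmed requests, then there exists a service run R with respect to trimmed requests such that π(R) ≥ (1/3)·π(R*). Here a service run feasible for untrimmed windows can be shifted by +0.5 or −0.5 in time and remains a geometrically feasible run. -/

import Mathlib

/-- The trimmed window of a unit time window `[t, t+1)`: the union of all periods
`[k/2, (k+1)/2)` wholly contained in the window (a unique one, when `t` is not a
half-integer). -/
def trimmedWindow (t : ℝ) : Set ℝ :=
  {x | ∃ k : ℤ, x ∈ Set.Ico ((k : ℝ) / 2) (((k : ℝ) + 1) / 2) ∧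
      Set.Ico ((k : ℝ) / 2) (((k : ℝ) + 1) / 2) ⊆ Set.Ico t (t + 1)}

lemma key_shift (t x : ℝ) (hhalf : ∀ k : ℤ, t ≠ (k : ℝ) / 2)
    (hx : x ∈ Set.Ico t (t + 1)) :
    x ∈ trimmedWindow t ∨ x + 1/2 ∈ trimmedWindow t ∨ x - 1/2 ∈ trimmedWindow t := by
  obtain ⟨hx1, hx2⟩ := hx
  set k : ℤ := ⌈2 * t⌉ with hk
  have hk1 : ((k : ℝ) - 1) < 2 * t := by
    have : (k - 1 : ℤ) < ⌈2 * t⌉ := by omega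
    have := Int.lt_ceil.mp this
    push_cast at this
    linarith
  have hk2 : 2 * t < (k : ℝ) := by
    have hle : 2 * t ≤ (k : ℝ) := Int.le_ceil _
    rcases lt_or_eq_of_le hle with h | h
    · exact h
    · exact absurd (by linarith : t = (k : ℝ) / 2) (hhalf k)
  have hsub : Set.Ico ((k : ℝ) / 2) (((k : ℝ) + 1) / 2) ⊆ Set.Ico t (t + 1) := by
    intro y hy
    obtain ⟨hy1, hy2⟩ := hy
    exact ⟨by linarith, by linarith⟩
  rcases lt_or_ge x ((k : ℝ) / 2) with h1 | h1
  · right; left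
    exact ⟨k, ⟨by linarith, by linarith⟩, hsub⟩
  · rcases lt_or_ge x (((k : ℝ) + 1) / 2) with h2 | h2
    · left
      exact ⟨k, ⟨h1, h2⟩, hsub⟩
    · right; right
      exact ⟨k, ⟨by linarith, by linarith⟩, hsub⟩

/-- Limited Loss Theorem: for any instance of the repairman problem with unit time
windows, given an optimal (indeed, any) service run `f` with respect to untrimmed
windows (a speed-`σ` time-parameterized path, i.e. a `σ`-Lipschitz map into the metric
space), there is a service run `g` of the same speed whose profit with respect to
trimmed windows is at least one third of the profit of `f` on untrimmed windows. -/
theorem stmt2 {M ι : Type*} [MetricSpace M] (σ : NNReal)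
    (req : Finset ι) (loc : ι → M) (start : ι → ℝ)
    (hpos : ∀ r, 0 < start r) (hhalf : ∀ r, ∀ k : ℤ, start r ≠ (k : ℝ) / 2)
    (f : ℝ → M) (hf : LipschitzWith σ f) :
    ∃ g : ℝ → M, LipschitzWith σ g ∧
      ((Set.ncard {r | r ∈ req ∧ ∃ x ∈ Set.Ico (start r) (start r + 1), f x = loc r} : ℝ) / 3
        ≤ (Set.ncard {r | r ∈ req ∧ ∃ x ∈ trimmedWindow (start r), g x = loc r} : ℝ)) := by
  classical
  set S : Set ι := {r | r ∈ req ∧ ∃ x ∈ Set.Ico (start r) (start r + 1), f x = loc r} with hS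
  set T : ℝ → Set ι := fun s =>
    {r | r ∈ req ∧ ∃ x ∈ trimmedWindow (start r), f (x - s) = loc r} with hT
  have hTfin : ∀ s, (T s).Finite := fun s =>
    Set.Finite.subset req.finite_toSet (fun r hr => hr.1)
  have hSsub : S ⊆ T 0 ∪ T (1/2) ∪ T (-(1/2)) := by
    intro r hr
    obtain ⟨hrreq, x, hx, hfx⟩ := hr
    rcases key_shift (start r) x (hhalf r) hx with h | h | h
    · left; left
      exact ⟨hrreq, x, h, by simpa using hfx⟩
    · left; right
      exact ⟨hrreq, x + 1/2, h, by simpa using hfx⟩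
    · right
      exact ⟨hrreq, x - 1/2, h, by simpa using hfx⟩
  have hg : ∀ s : ℝ, LipschitzWith σ (fun y => f (y - s)) := by
    intro s
    have : LipschitzWith 1 (fun y : ℝ => y - s) :=
      (IsometryEquiv.subRight s).isometry.lipschitz
    simpa [Function.comp_def] using hf.comp this
  have hcount : (S.ncard : ℝ) ≤ (T 0).ncard + (T (1/2)).ncard + (T (-(1/2))).ncard := by
    have h1 : S.ncard ≤ (T 0 ∪ T (1/2) ∪ T (-(1/2))).ncard :=
      Set.ncard_le_ncard hSsub (((hTfin 0).union (hTfin (1/2))).union (hTfin (-(1/2))))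
    have h2 : (T 0 ∪ T (1/2) ∪ T (-(1/2))).ncard ≤
        (T 0 ∪ T (1/2)).ncard + (T (-(1/2))).ncard :=
      Set.ncard_union_le _ _
    have h3 : (T 0 ∪ T (1/2)).ncard ≤ (T 0).ncard + (T (1/2)).ncard :=
      Set.ncard_union_le _ _
    have : S.ncard ≤ (T 0).ncard + (T (1/2)).ncard + (T (-(1/2))).ncard := by omega
    exact_mod_cast this
  have hmax : (S.ncard : ℝ) / 3 ≤ ((T 0).ncard : ℝ) ∨
      (S.ncard : ℝ) / 3 ≤ ((T (1/2)).ncard : ℝ) ∨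
      (S.ncard : ℝ) / 3 ≤ ((T (-(1/2))).ncard : ℝ) := by
    by_contra h
    push_neg at h
    obtain ⟨h1, h2, h3⟩ := h
    linarith
  rcases hmax with h | h | h
  · exact ⟨fun y => f (y - 0), hg 0, h⟩
  · exact ⟨fun y => f (y - 1/2), hg (1/2), h⟩
  · exact ⟨fun y => f (y - (-(1/2))), hg (-(1/2)), h⟩
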